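/- The function u(s) = ∫₀^s √(e^{r²} − 1) dr satisfies, for all s > 0, the equation ( (u'(s)/(s·√(1+u'(s)²))) · (u''(s)/(1+u'(s)²)^{3/2}) )^{1/2} = 1/√(1+u'(s)²). Equivalently, with λ₁ = u''/(1+u'²)^{3/2} and λ₂ = u'/(s√(1+u'²)), one has λ₁·λ₂ = 1/(1+u'²), so the rotationally symmetric graph of u over ℝ² is a √(S₂)-translator in ℝ³. -/

import Mathlib

open Real intervalIntegral

lemma cont_integrand : Continuous (fun r : ℝ => Real.sqrt (Real.exp (r ^ 2) - 1)) := by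
  continuity

lemma deriv_u_eq (u : ℝ → ℝ)
    (hu : ∀ s : ℝ, u s = ∫ r in (0 : ℝ)..s, Real.sqrt (Real.exp (r ^ 2) - 1)) :
    deriv u = fun s => Real.sqrt (Real.exp (s ^ 2) - 1) := by
  have : u = fun s => ∫ r in (0 : ℝ)..s, Real.sqrt (Real.exp (r ^ 2) - 1) := funext hu
  rw [this]
  funext s
  exact Continuous.deriv_integral _ cont_integrand 0 s

/-- `u(s) = ∫₀^s √(e^{r²} − 1) dr` satisfies, for all `s > 0`,
`λ₁ · λ₂ = 1/(1+u'(s)²)` where `λ₁ = u''/(1+u'²)^{3/2}` and `λ₂ = u'/(s√(1+u'²))`;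
i.e. the rotationally symmetric graph of `u` is a `√S₂`-translator in `ℝ³`. -/
theorem stmt5 (u : ℝ → ℝ)
    (hu : ∀ s : ℝ, u s = ∫ r in (0 : ℝ)..s, Real.sqrt (Real.exp (r ^ 2) - 1)) :
    ∀ s : ℝ, 0 < s →
      (deriv (deriv u) s / (1 + deriv u s ^ 2) ^ ((3 : ℝ) / 2)) *
        (deriv u s / (s * Real.sqrt (1 + deriv u s ^ 2))) =
      1 / (1 + deriv u s ^ 2) := by
  intro s hs
  have hd := deriv_u_eq u hu
  set E := Real.exp (s ^ 2) with hE
  have hE1 : 1 < E := by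
    rw [hE]
    have : (0:ℝ) < s ^ 2 := by positivity
    calc (1:ℝ) = Real.exp 0 := (Real.exp_zero).symm
    _ < Real.exp (s ^ 2) := Real.exp_lt_exp.2 this
  have hEpos : 0 < E := lt_trans one_pos hE1
  have hpos : 0 < E - 1 := by linarith
  have hsq : Real.sqrt (E - 1) ^ 2 = E - 1 := Real.sq_sqrt hpos.le
  have hsqpos : 0 < Real.sqrt (E - 1) := Real.sqrt_pos.2 hpos
  -- second derivative
  have hdd : deriv (deriv u) s = s * E / Real.sqrt (E - 1) := by
    rw [hd]
    have h1 : HasDerivAt (fun t : ℝ => Real.exp (t ^ 2) - 1)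
        (Real.exp (s ^ 2) * (2 * s)) s := by
      have : HasDerivAt (fun t : ℝ => t ^ 2) (2 * s) s := by
        simpa using hasDerivAt_pow 2 s
      simpa using ((this.exp).sub_const 1)
    have h2 : HasDerivAt (fun t : ℝ => Real.sqrt (Real.exp (t ^ 2) - 1))
        (Real.exp (s ^ 2) * (2 * s) / (2 * Real.sqrt (Real.exp (s ^ 2) - 1))) s :=
      h1.sqrt (by rw [← hE]; exact ne_of_gt hpos)
    rw [h2.deriv, ← hE]
    field_simp
  have hderiv : deriv u s = Real.sqrt (E - 1) := by rw [hd, hE]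
  rw [hdd, hderiv]
  have h1u : 1 + Real.sqrt (E - 1) ^ 2 = E := by rw [hsq]; ring
  rw [h1u]
  have hne1 : Real.sqrt (E - 1) ≠ 0 := ne_of_gt hsqpos
  have hne2 : (E : ℝ) ^ ((3:ℝ)/2) ≠ 0 := ne_of_gt (Real.rpow_pos_of_pos hEpos _)
  have hne3 : Real.sqrt E ≠ 0 := ne_of_gt (Real.sqrt_pos.2 hEpos)
  have key : (E:ℝ) ^ ((3:ℝ)/2) * Real.sqrt E = E ^ 2 := by
    rw [Real.sqrt_eq_rpow, ← Real.rpow_add hEpos]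
    norm_num
  field_simp
  exact key.symm
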